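/- For all real numbers d_0, d_1 and every integer k ≥ 1: c^{(k)}(d_0, d_1) = ∫_{−1}^{1} Q(x)^k dμ_e(x). -/

import Mathlib

open Finset Real

/-- The weights `U_0 = d1/4`, `U_1 = d0/2`, `U_2 = d1/8`. -/
noncomputable def Uwt (d0 d1 : ℝ) : ℕ → ℝ :=
  fun a => if a = 0 then d1 / 4 else if a = 1 then d0 / 2 else d1 / 8

/-- The weighted closed-path sum `c^{(k)}(d0,d1)`: the sum over all sequences
`γ : Fin k → {-2,-1,0,1,2}` with `∑ γ t = 0` of `∏ t, U_{|γ t|}`. -/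
noncomputable def cpath (d0 d1 : ℝ) (k : ℕ) : ℝ :=
  ∑ γ ∈ (Finset.univ : Finset (Fin k → ({-2, -1, 0, 1, 2} : Finset ℤ))).filter
      (fun γ => ∑ t, (γ t : ℤ) = 0),
    ∏ t, Uwt d0 d1 (γ t : ℤ).natAbs

abbrev Sfin : Finset ℤ := {-2, -1, 0, 1, 2}

lemma stepA (d0 d1 θ : ℝ) :
    ((d1 / 2 * Real.cos θ ^ 2 + d0 * Real.cos θ : ℝ) : ℂ)
      = ∑ γ : (Sfin : Finset ℤ), ((Uwt d0 d1 (γ : ℤ).natAbs : ℝ) : ℂ)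
          * Complex.exp ((γ : ℤ) * Complex.I * θ) := by
  rw [Finset.sum_coe_sort Sfin
    (fun z => ((Uwt d0 d1 z.natAbs : ℝ) : ℂ) * Complex.exp ((z : ℤ) * Complex.I * θ))]
  rw [show Sfin = {-2, -1, 0, 1, 2} from rfl]
  rw [Finset.sum_insert (by decide), Finset.sum_insert (by decide),
    Finset.sum_insert (by decide), Finset.sum_insert (by decide), Finset.sum_singleton]
  set E : ℂ := Complex.exp (Complex.I * θ) with hEdef
  have hE : ∀ z : ℤ, Complex.exp ((z:ℂ) * Complex.I * θ) = E ^ z := by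
    intro z
    rw [mul_assoc, Complex.exp_int_mul]
  have hcos : Complex.cos (θ:ℂ) = (E + E⁻¹) / 2 := by
    rw [Complex.cos,
      show ((θ:ℂ) * Complex.I) = Complex.I * θ from mul_comm _ _,
      show (-(θ:ℂ)) * Complex.I = -(Complex.I * θ) by ring, ← Complex.exp_neg]
  have hE0 : E ≠ 0 := Complex.exp_ne_zero _
  rw [hE (-2), hE (-1), hE 0, hE 1, hE 2]
  have u2 : Uwt d0 d1 ((-2:ℤ)).natAbs = d1 / 8 := by norm_num [Uwt]
  have u1 : Uwt d0 d1 ((-1:ℤ)).natAbs = d0 / 2 := by norm_num [Uwt]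
  have u0 : Uwt d0 d1 ((0:ℤ)).natAbs = d1 / 4 := by norm_num [Uwt]
  rw [u2, u1, u0, show ((1:ℤ)).natAbs = (1:ℕ) from rfl, show ((2:ℤ)).natAbs = (2:ℕ) from rfl,
    show Uwt d0 d1 1 = d0 / 2 by norm_num [Uwt], show Uwt d0 d1 2 = d1 / 8 by norm_num [Uwt]]
  rw [show ((-2:ℤ)) = -(2:ℤ) from rfl, show ((-1:ℤ)) = -(1:ℤ) from rfl]
  simp only [zpow_neg, zpow_one, zpow_zero, zpow_two]
  push_cast
  rw [hcos]
  field_simp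
  ring

lemma expInt (n : ℤ) :
    (∫ θ : ℝ in (-π)..π, Complex.exp (n * Complex.I * θ))
      = if n = 0 then (2 * π : ℂ) else 0 := by
  rcases eq_or_ne n 0 with h | h
  · simp [h, two_mul]
  · rw [if_neg h]
    have hc : (n : ℂ) * Complex.I ≠ 0 := by
      simp [Complex.ext_iff, Complex.I_ne_zero, h]
    rw [integral_exp_mul_complex hc]
    have : Complex.exp ((n:ℂ) * Complex.I * (π:ℝ)) = Complex.exp ((n:ℂ) * Complex.I * ((-π:ℝ))) := by
      rw [Complex.exp_eq_exp_iff_exists_int]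
      exact ⟨n, by push_cast; ring⟩
    rw [this, sub_self, zero_div]

lemma stepC (d0 d1 : ℝ) (k : ℕ) :
    (∫ θ in (-π)..π, (d1 / 2 * Real.cos θ ^ 2 + d0 * Real.cos θ) ^ k)
      = 2 * π * cpath d0 d1 k := by
  have key : (∫ θ in (-π)..π,
      (((d1 / 2 * Real.cos θ ^ 2 + d0 * Real.cos θ) ^ k : ℝ) : ℂ))
      = ((2 * π * cpath d0 d1 k : ℝ) : ℂ) := by
    have hint : ∀ θ : ℝ, (((d1 / 2 * Real.cos θ ^ 2 + d0 * Real.cos θ) ^ k : ℝ) : ℂ)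
        = ∑ p : Fin k → (Sfin : Finset ℤ),
            (∏ t, ((Uwt d0 d1 (p t : ℤ).natAbs : ℝ) : ℂ))
              * Complex.exp ((∑ t, (p t : ℤ) : ℤ) * Complex.I * θ) := by
      intro θ
      rw [Complex.ofReal_pow, stepA d0 d1 θ, Fintype.sum_pow]
      refine Finset.sum_congr rfl fun p _ => ?_
      rw [Finset.prod_mul_distrib, ← Complex.exp_sum]
      congr 1
      push_cast
      rw [Finset.sum_mul, Finset.sum_mul]
    simp_rw [hint]
    rw [intervalIntegral.integral_finset_sum]
    · have : ∀ p : Fin k → (Sfin : Finset ℤ),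
          (∫ θ : ℝ in (-π)..π,
            (∏ t, ((Uwt d0 d1 (p t : ℤ).natAbs : ℝ) : ℂ))
              * Complex.exp ((∑ t, (p t : ℤ) : ℤ) * Complex.I * θ))
          = (∏ t, ((Uwt d0 d1 (p t : ℤ).natAbs : ℝ) : ℂ))
              * (if (∑ t, (p t : ℤ)) = 0 then (2 * π : ℂ) else 0) := by
        intro p
        rw [intervalIntegral.integral_const_mul, expInt]
      simp_rw [this]
      rw [cpath, Complex.ofReal_mul, Complex.ofReal_sum]
      rw [Finset.sum_filter]
      push_cast
      rw [Finset.mul_sum]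
      refine Finset.sum_congr rfl fun p _ => ?_
      split_ifs <;> ring
    · intro p _
      apply Continuous.intervalIntegrable
      exact continuous_const.mul (Complex.continuous_exp.comp (by fun_prop))
  rw [← Complex.ofReal_inj, ← key, intervalIntegral.integral_ofReal]

lemma stepE (g : ℝ → ℝ) :
    (∫ x in (-1:ℝ)..1, g x / (π * Real.sqrt (1 - x ^ 2)))
      = ∫ θ in (0:ℝ)..π, g (Real.cos θ) / π := by
  rw [intervalIntegral.integral_of_le (by norm_num : (-1:ℝ) ≤ 1),
    intervalIntegral.integral_of_le Real.pi_pos.le,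
    MeasureTheory.integral_Ioc_eq_integral_Ioo,
    MeasureTheory.integral_Ioc_eq_integral_Ioo]
  have himg : Set.Ioo (-1:ℝ) 1 = Real.cos '' Set.Ioo 0 π := by
    ext x
    constructor
    · rintro ⟨h1, h2⟩
      refine ⟨Real.arccos x, ⟨Real.arccos_pos.2 h2, ?_⟩, Real.cos_arccos h1.le h2.le⟩
      rcases lt_or_eq_of_le (Real.arccos_le_pi x) with h | h
      · exact h
      · exact absurd (Real.arccos_eq_pi.1 h) (by linarith)
    · rintro ⟨θ, ⟨h0, hπ⟩, rfl⟩
      constructor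
      · calc (-1:ℝ) = Real.cos π := (Real.cos_pi).symm
          _ < Real.cos θ := Real.strictAntiOn_cos ⟨h0.le, hπ.le⟩
              ⟨Real.pi_pos.le, le_refl π⟩ hπ
      · calc Real.cos θ < Real.cos 0 := Real.strictAntiOn_cos ⟨le_refl 0, Real.pi_pos.le⟩
              ⟨h0.le, hπ.le⟩ h0
          _ = 1 := Real.cos_zero
  rw [himg, MeasureTheory.integral_image_eq_integral_abs_deriv_smul measurableSet_Ioo
      (fun x _ => (Real.hasDerivAt_cos x).hasDerivWithinAt)
      (Real.injOn_cos.mono (Set.Ioo_subset_Icc_self)) (fun x => g x / (π * Real.sqrt (1 - x ^ 2)))]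
  apply MeasureTheory.setIntegral_congr_fun measurableSet_Ioo
  intro θ hθ
  have hs : 0 < Real.sin θ := Real.sin_pos_of_pos_of_lt_pi hθ.1 hθ.2
  have hsq : Real.sqrt (1 - Real.cos θ ^ 2) = Real.sin θ := by
    rw [show (1 : ℝ) - Real.cos θ ^ 2 = Real.sin θ ^ 2 by
      rw [← Real.sin_sq_add_cos_sq θ]; ring]
    exact Real.sqrt_sq hs.le
  simp only [smul_eq_mul, hsq, abs_neg, abs_of_pos hs]
  have hπ0 : (π : ℝ) ≠ 0 := Real.pi_ne_zero
  field_simp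

theorem cpath_eq_arcsine_moment (d0 d1 : ℝ) (k : ℕ) (hk : 1 ≤ k) :
    cpath d0 d1 k
      = ∫ x in (-1 : ℝ)..1, (d1 / 2 * x ^ 2 + d0 * x) ^ k / (π * Real.sqrt (1 - x ^ 2)) := by
  rw [stepE (fun x => (d1 / 2 * x ^ 2 + d0 * x) ^ k)]
  have hcont : Continuous fun θ : ℝ => (d1 / 2 * Real.cos θ ^ 2 + d0 * Real.cos θ) ^ k := by
    fun_prop
  have hsplit :
      (∫ θ in (-π)..π, (d1 / 2 * Real.cos θ ^ 2 + d0 * Real.cos θ) ^ k)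
        = 2 * ∫ θ in (0:ℝ)..π, (d1 / 2 * Real.cos θ ^ 2 + d0 * Real.cos θ) ^ k := by
    rw [← intervalIntegral.integral_add_adjacent_intervals
      (hcont.intervalIntegrable (-π) 0) (hcont.intervalIntegrable 0 π)]
    have hneg : (∫ θ in (-π)..(0:ℝ), (d1 / 2 * Real.cos θ ^ 2 + d0 * Real.cos θ) ^ k)
        = ∫ θ in (0:ℝ)..π, (d1 / 2 * Real.cos θ ^ 2 + d0 * Real.cos θ) ^ k := by
      rw [show (∫ θ in (0:ℝ)..π, (d1 / 2 * Real.cos θ ^ 2 + d0 * Real.cos θ) ^ k)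
          = ∫ θ in (0:ℝ)..π, (d1 / 2 * Real.cos (-θ) ^ 2 + d0 * Real.cos (-θ)) ^ k by
        simp [Real.cos_neg]]
      rw [intervalIntegral.integral_comp_neg
        (fun θ => (d1 / 2 * Real.cos θ ^ 2 + d0 * Real.cos θ) ^ k)]
      norm_num
    rw [hneg]; ring
  have hC := stepC d0 d1 k
  rw [hsplit] at hC
  rw [intervalIntegral.integral_div]
  have hπ0 : (π : ℝ) ≠ 0 := Real.pi_ne_zero
  have h2 : (∫ θ in (0:ℝ)..π, (d1 / 2 * Real.cos θ ^ 2 + d0 * Real.cos θ) ^ k)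
      = π * cpath d0 d1 k := by linarith [hC]
  rw [h2, mul_comm, mul_div_assoc, div_self hπ0, mul_one]
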